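/- Lemma 2.2: Let n ≥ 1 be an integer and k ≥ 2 an integer. The function q ↦ (γ_k(n/q) − 1)/(q − 2) is strictly monotone increasing on (1, ∞); precisely, for all real q₁, q₂ with 1 < q₁ < q₂, q₁ ≠ 2 and q₂ ≠ 2, one has (γ_k(n/q₁) − 1)/(q₁ − 2) < (γ_k(n/q₂) − 1)/(q₂ − 2). -/

import Mathlib

open Real

/-- The spectral function `γ_k(x) = Γ(x) Γ(n − x + k) / (Γ(n − x) Γ(x + k))`. -/
noncomputable def gammaFun (n k : ℕ) (x : ℝ) : ℝ :=
  Gamma x * Gamma ((n : ℝ) - x + k) / (Gamma ((n : ℝ) - x) * Gamma (x + k))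

namespace GammaFunAux

/-- The elementary factor `u_j(q) = ((n+j)q − n)/(jq + n)`. -/
noncomputable def u (n j : ℕ) (q : ℝ) : ℝ := (((n : ℝ) + j) * q - n) / ((j : ℝ) * q + n)

/-- `g(q) = γ_k(n/q)` as a rational function. -/
noncomputable def g (n k : ℕ) (q : ℝ) : ℝ := ∏ j ∈ Finset.range k, u n j q

/-- The difference quotient `(g(q)−1)/(q−2)` written without the singularity. -/
noncomputable def f (n k : ℕ) (q : ℝ) : ℝ :=
  1 + n * ∑ m ∈ Finset.Ico 1 k,
    ((q - 1) / ((m : ℝ) * q + n) * ∏ j ∈ Finset.Ico 1 m, u n j q)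

variable {n j k : ℕ} {q q₁ q₂ : ℝ}

lemma n_pos (hn : 1 ≤ n) : (1 : ℝ) ≤ (n : ℝ) := by exact_mod_cast hn

lemma denom_pos (hn : 1 ≤ n) (hq : 1 < q) : 0 < (j : ℝ) * q + n := by
  have h1 : (1 : ℝ) ≤ (n : ℝ) := n_pos hn
  have h2 : (0 : ℝ) ≤ (j : ℝ) := Nat.cast_nonneg j
  nlinarith

lemma num_pos (hn : 1 ≤ n) (hq : 1 < q) : 0 < ((n : ℝ) + j) * q - n := by
  have h1 : (1 : ℝ) ≤ (n : ℝ) := n_pos hn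
  have h2 : (0 : ℝ) ≤ (j : ℝ) := Nat.cast_nonneg j
  nlinarith

lemma u_pos (hn : 1 ≤ n) (hq : 1 < q) : 0 < u n j q :=
  div_pos (num_pos hn hq) (denom_pos hn hq)

lemma u_mono (hn : 1 ≤ n) (hq : 1 < q₁) (h12 : q₁ ≤ q₂) : u n j q₁ ≤ u n j q₂ := by
  have hq₂ : 1 < q₂ := lt_of_lt_of_le hq h12
  rw [u, u, div_le_div_iff₀ (denom_pos hn hq) (denom_pos hn hq₂)]
  have h1 : (1 : ℝ) ≤ (n : ℝ) := n_pos hn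
  have h2 : (0 : ℝ) ≤ (j : ℝ) := Nat.cast_nonneg j
  nlinarith [mul_nonneg (mul_nonneg (by linarith : (0:ℝ) ≤ (n:ℝ)) (by linarith : (0:ℝ) ≤ (n:ℝ) + 2*j)) (sub_nonneg.mpr h12)]

lemma prod_pos (hn : 1 ≤ n) (hq : 1 < q) (s : Finset ℕ) :
    0 < ∏ j ∈ s, u n j q :=
  Finset.prod_pos fun _ _ => u_pos hn hq

lemma prod_mono (hn : 1 ≤ n) (hq : 1 < q₁) (h12 : q₁ ≤ q₂) (s : Finset ℕ) :
    ∏ j ∈ s, u n j q₁ ≤ ∏ j ∈ s, u n j q₂ :=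
  Finset.prod_le_prod (fun _ _ => (u_pos hn hq).le) (fun _ _ => u_mono hn hq h12)

lemma frac_strict (hn : 1 ≤ n) (hq : 1 < q₁) (h12 : q₁ < q₂) (m : ℕ) :
    (q₁ - 1) / ((m : ℝ) * q₁ + n) < (q₂ - 1) / ((m : ℝ) * q₂ + n) := by
  have hq₂ : 1 < q₂ := lt_trans hq h12
  rw [div_lt_div_iff₀ (denom_pos hn hq) (denom_pos hn hq₂)]
  have h1 : (1 : ℝ) ≤ (n : ℝ) := n_pos hn
  have h2 : (0 : ℝ) ≤ (m : ℝ) := Nat.cast_nonneg m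
  nlinarith

lemma frac_pos (hn : 1 ≤ n) (hq : 1 < q) (m : ℕ) : 0 < (q - 1) / ((m : ℝ) * q + n) :=
  div_pos (by linarith) (denom_pos hn hq)

lemma term_strict (hn : 1 ≤ n) (hq : 1 < q₁) (h12 : q₁ < q₂) (m : ℕ) :
    (q₁ - 1) / ((m : ℝ) * q₁ + n) * ∏ j ∈ Finset.Ico 1 m, u n j q₁ <
      (q₂ - 1) / ((m : ℝ) * q₂ + n) * ∏ j ∈ Finset.Ico 1 m, u n j q₂ := by
  have hq₂ : 1 < q₂ := lt_trans hq h12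
  calc (q₁ - 1) / ((m : ℝ) * q₁ + n) * ∏ j ∈ Finset.Ico 1 m, u n j q₁
      < (q₂ - 1) / ((m : ℝ) * q₂ + n) * ∏ j ∈ Finset.Ico 1 m, u n j q₁ := by
        exact mul_lt_mul_of_pos_right (frac_strict hn hq h12 m) (prod_pos hn hq _)
    _ ≤ (q₂ - 1) / ((m : ℝ) * q₂ + n) * ∏ j ∈ Finset.Ico 1 m, u n j q₂ := by
        exact mul_le_mul_of_nonneg_left (prod_mono hn hq h12.le _) (frac_pos hn hq₂ m).le

/-- `f` is strictly increasing on `(1, ∞)` for `k ≥ 2`. -/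
lemma f_strict (hn : 1 ≤ n) (hk : 2 ≤ k) (hq : 1 < q₁) (h12 : q₁ < q₂) :
    f n k q₁ < f n k q₂ := by
  have hne : (Finset.Ico 1 k).Nonempty := ⟨1, by simp; omega⟩
  have hsum : ∑ m ∈ Finset.Ico 1 k,
      ((q₁ - 1) / ((m : ℝ) * q₁ + n) * ∏ j ∈ Finset.Ico 1 m, u n j q₁) <
      ∑ m ∈ Finset.Ico 1 k,
      ((q₂ - 1) / ((m : ℝ) * q₂ + n) * ∏ j ∈ Finset.Ico 1 m, u n j q₂) :=
    Finset.sum_lt_sum_of_nonempty hne fun m _ => term_strict hn hq h12 m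
  have hnpos : (0 : ℝ) < (n : ℝ) := lt_of_lt_of_le one_pos (n_pos hn)
  unfold f
  have := mul_lt_mul_of_pos_left hsum hnpos
  linarith

lemma u_zero (hn : 1 ≤ n) : u n 0 q = q - 1 := by
  have hnz : (n : ℝ) ≠ 0 := by positivity
  rw [u]
  push_cast
  field_simp
  ring_nf
  rw [mul_right_comm, mul_inv_cancel₀ hnz]
  ring

lemma g_succ : g n (k + 1) q = g n k q * u n k q := Finset.prod_range_succ _ _

lemma g_factor (hn : 1 ≤ n) : g n k q = (if 1 ≤ k then (q - 1) * ∏ j ∈ Finset.Ico 1 k, u n j q else 1) := by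
  rcases Nat.eq_zero_or_pos k with h | h
  · simp [g, h]
  · have h' : 1 ≤ k := h
    rw [if_pos h', g, Finset.range_eq_Ico, Finset.prod_eq_prod_Ico_succ_bot h, u_zero hn]

/-- The key identity `(q − 2) f(q) = g(q) − 1` for `k ≥ 1`. -/
lemma key (hn : 1 ≤ n) (hk : 1 ≤ k) (hq : 1 < q) :
    (q - 2) * f n k q = g n k q - 1 := by
  induction k, hk using Nat.le_induction with
  | base =>
    simp [f, g, Finset.range_one, u_zero hn]
    ring
  | succ k hk1 ih =>
    have hg : g n k q = (q - 1) * ∏ j ∈ Finset.Ico 1 k, u n j q := by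
      rw [g_factor hn, if_pos hk1]
    have hsum : f n (k + 1) q = f n k q +
        n * ((q - 1) / ((k : ℝ) * q + n) * ∏ j ∈ Finset.Ico 1 k, u n j q) := by
      rw [f, f, Finset.sum_Ico_succ_top hk1]
      ring
    have hd : ((k : ℝ) * q + n) ≠ 0 := (denom_pos hn hq).ne'
    have huk : u n k q - 1 = (n : ℝ) * (q - 2) / ((k : ℝ) * q + n) := by
      rw [u]
      field_simp
      ring
    rw [hsum, g_succ]
    have expand : (q - 2) * (f n k q +
        n * ((q - 1) / ((k : ℝ) * q + n) * ∏ j ∈ Finset.Ico 1 k, u n j q)) =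
        (q - 2) * f n k q + (u n k q - 1) * g n k q := by
      rw [huk, hg]
      field_simp
    rw [expand, ih]
    ring

lemma Gamma_add_nat {x : ℝ} (hx : 0 < x) (k : ℕ) :
    Gamma (x + k) = Gamma x * ∏ j ∈ Finset.range k, (x + j) := by
  induction k with
  | zero => simp
  | succ k ih =>
    have hxk : x + (k : ℝ) ≠ 0 := by positivity
    have : x + ((k : ℕ) + 1 : ℕ) = (x + k) + 1 := by push_cast; ring
    rw [this, Gamma_add_one hxk, ih, Finset.prod_range_succ]
    ring

lemma gammaFun_eq (hn : 1 ≤ n) {x : ℝ} (hx : 0 < x) (hx' : x < n) :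
    gammaFun n k x = ∏ j ∈ Finset.range k, (((n : ℝ) - x + j) / (x + j)) := by
  have hnx : 0 < (n : ℝ) - x := by linarith
  have hΓx : Gamma x ≠ 0 := (Gamma_pos_of_pos hx).ne'
  have hΓnx : Gamma ((n : ℝ) - x) ≠ 0 := (Gamma_pos_of_pos hnx).ne'
  rw [gammaFun, Gamma_add_nat hnx, Gamma_add_nat hx, Finset.prod_div_distrib]
  field_simp

/-- `γ_k(n/q) = g(q)` for `q > 1`. -/
lemma gammaFun_div (hn : 1 ≤ n) (hq : 1 < q) : gammaFun n k ((n : ℝ) / q) = g n k q := by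
  have hq0 : (0 : ℝ) < q := lt_trans one_pos hq
  have hnpos : (0 : ℝ) < (n : ℝ) := lt_of_lt_of_le one_pos (n_pos hn)
  have hx : 0 < (n : ℝ) / q := div_pos hnpos hq0
  have hx' : (n : ℝ) / q < n := by
    rw [div_lt_iff₀ hq0]; nlinarith
  rw [gammaFun_eq hn hx hx', g]
  apply Finset.prod_congr rfl
  intro j _
  have hd1 : (n : ℝ) / q + j > 0 := by positivity
  rw [u, div_eq_div_iff (by positivity : ((n:ℝ)/q + (j:ℝ)) ≠ 0) (denom_pos hn hq).ne']
  field_simp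
  ring

end GammaFunAux

open GammaFunAux in
/-- Lemma 2.2: strict monotonicity of `q ↦ (γ_k(n/q) − 1)/(q − 2)` on `(1, ∞)`. -/
theorem gammaFun_quotient_strictMono (n k : ℕ) (hn : 1 ≤ n) (hk : 2 ≤ k) :
    ∀ q₁ q₂ : ℝ, 1 < q₁ → q₁ < q₂ → q₁ ≠ 2 → q₂ ≠ 2 →
      (gammaFun n k ((n : ℝ) / q₁) - 1) / (q₁ - 2) <
        (gammaFun n k ((n : ℝ) / q₂) - 1) / (q₂ - 2) := by
  intro q₁ q₂ hq₁ h12 hq₁2 hq₂2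
  have hq₂ : 1 < q₂ := lt_trans hq₁ h12
  have hk1 : 1 ≤ k := le_trans one_le_two hk
  have e₁ : (gammaFun n k ((n : ℝ) / q₁) - 1) / (q₁ - 2) = f n k q₁ := by
    rw [gammaFun_div hn hq₁, ← key hn hk1 hq₁,
      mul_div_cancel_left₀ _ (sub_ne_zero.mpr hq₁2)]
  have e₂ : (gammaFun n k ((n : ℝ) / q₂) - 1) / (q₂ - 2) = f n k q₂ := by
    rw [gammaFun_div hn hq₂, ← key hn hk1 hq₂,
      mul_div_cancel_left₀ _ (sub_ne_zero.mpr hq₂2)]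
  rw [e₁, e₂]
  exact f_strict hn hk hq₁ h12
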